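/- Let l ≥ 2, let a_1, …, a_l, u, v be real numbers, and let T be the l×l tridiagonal matrix with diagonal entries a_1, …, a_l, entries −1 immediately above and below the diagonal, and 0 elsewhere. Let B be the (l+1)×(l+1) symmetric matrix whose first row and first column equal (0, u, 0, …, 0, v) and whose lower-right l×l block is T. Then −det B = u²·D(a_2, …, a_l) + 2uv + v²·D(a_1, …, a_{l−1}). -/

import Mathlib

open Matrix

/-- Tridiagonal determinant `D(a_1, …, a_n)` over ℝ. -/
noncomputable def Dr : List ℝ → ℝ
  | [] => 1
  | [a] => a
  | a :: b :: l => a * Dr (b :: l) - Dr l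

/-- The `l×l` tridiagonal matrix with diagonal entries `a_1, …, a_l` and entries `−1`
immediately above and below the diagonal. -/
def tridiagR {l : ℕ} (a : Fin l → ℝ) : Matrix (Fin l) (Fin l) ℝ :=
  Matrix.of fun i j =>
    if i = j then a i
    else if (i : ℕ) + 1 = (j : ℕ) ∨ (j : ℕ) + 1 = (i : ℕ) then -1 else 0

/-- The `(l+1)×(l+1)` symmetric matrix whose first row and column equal
`(0, u, 0, …, 0, v)` and whose lower-right `l×l` block is the tridiagonal matrix `T`. -/
noncomputable def borderedT {l : ℕ} (a : Fin l → ℝ) (u v : ℝ) :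
    Matrix (Option (Fin l)) (Option (Fin l)) ℝ :=
  Matrix.of fun p q =>
    match p, q with
    | none, none => 0
    | none, some j => if (j : ℕ) = 0 then u else if (j : ℕ) = l - 1 then v else 0
    | some j, none => if (j : ℕ) = 0 then u else if (j : ℕ) = l - 1 then v else 0
    | some j, some j' => tridiagR a j j'

lemma tridiagR_apply' {m : ℕ} (a : Fin m → ℝ) (i j : Fin m) :
    tridiagR a i j =
      if (i : ℕ) = (j : ℕ) then a i
      else if (i : ℕ) + 1 = (j : ℕ) ∨ (j : ℕ) + 1 = (i : ℕ) then -1 else 0 := by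
  simp [tridiagR, Fin.ext_iff]

lemma tridiag_succ_succ {m : ℕ} (a : Fin (m + 1) → ℝ) (i j : Fin m) :
    tridiagR a i.succ j.succ = tridiagR (fun k => a k.succ) i j := by
  rw [tridiagR_apply', tridiagR_apply']
  simp only [Fin.val_succ]
  split_ifs <;> first | rfl | omega | (exfalso; omega)

lemma tridiag_cast_cast {m : ℕ} (a : Fin (m + 1) → ℝ) (i j : Fin m) :
    tridiagR a i.castSucc j.castSucc = tridiagR (fun k => a k.castSucc) i j := by
  rw [tridiagR_apply', tridiagR_apply']
  simp only [Fin.coe_castSucc]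

lemma succAbove_one_zero {m : ℕ} : (1 : Fin (m + 2)).succAbove (0 : Fin (m + 1)) = 0 := by
  rw [Fin.succAbove_of_castSucc_lt]
  · rfl
  · simp [Fin.lt_def]

lemma succAbove_one_succ {m : ℕ} (c : Fin m) :
    (1 : Fin (m + 2)).succAbove c.succ = c.succ.succ := by
  rw [← Fin.succ_zero_eq_one, Fin.succ_succAbove_succ, Fin.succAbove_zero]

lemma tridiag_det : ∀ (m : ℕ) (a : Fin m → ℝ), (tridiagR a).det = Dr (List.ofFn a)
  | 0, a => by
      simp [Matrix.det_isEmpty, Dr]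
  | 1, a => by
      rw [Matrix.det_fin_one]
      simp [tridiagR_apply', Dr]
  | (m + 2), a => by
      rw [Matrix.det_succ_row_zero,
        Finset.sum_eq_add_of_mem (0 : Fin (m + 2)) 1 (Finset.mem_univ _) (Finset.mem_univ _)
          (by simp [Fin.ext_iff])
          (fun c _ hc => by
            have hc0 : (c : ℕ) ≠ 0 := fun h => hc.1 (Fin.ext (by simp [h]))
            have hc1 : (c : ℕ) ≠ 1 := fun h => hc.2 (Fin.ext (by simp [h]))
            rw [tridiagR_apply',
              if_neg (by simp only [Fin.val_zero]; omega),
              if_neg (by simp only [Fin.val_zero]; omega)]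
            ring)]
      have e1 : (tridiagR a).submatrix Fin.succ ((0 : Fin (m + 2)).succAbove) =
          tridiagR (fun k : Fin (m + 1) => a k.succ) := by
        ext i j
        rw [Fin.succAbove_zero, Matrix.submatrix_apply, tridiag_succ_succ]
      have e2 : ((tridiagR a).submatrix Fin.succ ((1 : Fin (m + 2)).succAbove)).det =
          - Dr (List.ofFn (fun k : Fin m => a k.succ.succ)) := by
        rw [Matrix.det_succ_column_zero,
          Finset.sum_eq_single_of_mem (0 : Fin (m + 1)) (Finset.mem_univ _)
            (fun i _ hi => by
              have : (i : ℕ) ≠ 0 := fun h => hi (Fin.ext (by simpa using h))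
              rw [Matrix.submatrix_apply, succAbove_one_zero, tridiagR_apply',
                if_neg (by simp only [Fin.val_succ, Fin.val_zero]; omega),
                if_neg (by simp only [Fin.val_succ, Fin.val_zero]; omega)]
              ring)]
        have e3 : ((tridiagR a).submatrix Fin.succ
            ((1 : Fin (m + 2)).succAbove)).submatrix ((0 : Fin (m + 1)).succAbove) Fin.succ =
            tridiagR (fun k : Fin m => a k.succ.succ) := by
          ext r c
          rw [Matrix.submatrix_apply, Matrix.submatrix_apply, Fin.succAbove_zero,
            succAbove_one_succ, tridiag_succ_succ, tridiag_succ_succ]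
        rw [e3, tridiag_det m _, Matrix.submatrix_apply, succAbove_one_zero,
          tridiagR_apply']
        simp
      rw [e1, e2, tridiag_det (m + 1) _]
      rw [tridiagR_apply' a 0 0, tridiagR_apply' a 0 1]
      rw [List.ofFn_succ (f := a), List.ofFn_succ (f := fun i : Fin (m + 1) => a i.succ)]
      simp [Dr]
      ring

/-- `−det B = u²·D(a_2, …, a_l) + 2uv + v²·D(a_1, …, a_{l−1})`. -/
theorem stmt8 (l : ℕ) (hl : 2 ≤ l) (a : Fin l → ℝ) (u v : ℝ) :
    -(borderedT a u v).det =
      u ^ 2 * Dr (List.ofFn a).tail + 2 * u * v +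
        v ^ 2 * Dr ((List.ofFn a).take (l - 1)) := by
  obtain ⟨n, rfl⟩ : ∃ n, l = n + 2 := ⟨l - 2, by omega⟩
  set A : Matrix (Fin (n + 3)) (Fin (n + 3)) ℝ :=
    (borderedT a u v).submatrix (finSuccEquiv (n + 2)) (finSuccEquiv (n + 2)) with hA
  have hAs : ∀ i j : Fin (n + 2), A i.succ j.succ = tridiagR a i j := by
    intro i j
    simp only [hA, Matrix.submatrix_apply, finSuccEquiv_succ]
    rfl
  have hA0 : A 0 0 = 0 := by
    simp only [hA, Matrix.submatrix_apply, finSuccEquiv_zero]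
    rfl
  have hw1 : ∀ j : Fin (n + 2),
      A 0 j.succ = if (j : ℕ) = 0 then u else if (j : ℕ) = n + 1 then v else 0 := by
    intro j
    simp only [hA, Matrix.submatrix_apply, finSuccEquiv_zero, finSuccEquiv_succ]
    rfl
  have hw2 : ∀ j : Fin (n + 2),
      A j.succ 0 = if (j : ℕ) = 0 then u else if (j : ℕ) = n + 1 then v else 0 := by
    intro j
    simp only [hA, Matrix.submatrix_apply, finSuccEquiv_zero, finSuccEquiv_succ]
    rfl
  -- the two inner tridiagonal minors
  have eF1 : (A.submatrix Fin.succ ((1 : Fin (n + 3)).succAbove)).submatrix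
      ((0 : Fin (n + 2)).succAbove) Fin.succ = tridiagR (fun k : Fin (n + 1) => a k.succ) := by
    ext r c
    simp only [Matrix.submatrix_apply]
    rw [Fin.succAbove_zero, succAbove_one_succ, hAs, tridiag_succ_succ]
  have eF2 : (A.submatrix Fin.succ ((Fin.last (n + 2)).succAbove)).submatrix
      ((Fin.last (n + 1)).succAbove) Fin.succ =
      tridiagR (fun k : Fin (n + 1) => a k.castSucc) := by
    ext r c
    simp only [Matrix.submatrix_apply]
    rw [Fin.succAbove_last, Fin.succAbove_last, ← Fin.succ_castSucc, hAs, tridiag_cast_cast]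
  -- the two triangular minors
  have eG1 : (((A.submatrix Fin.succ ((1 : Fin (n + 3)).succAbove)).submatrix
      ((Fin.last (n + 1)).succAbove) Fin.succ)).det = (-1 : ℝ) ^ (n + 1) := by
    have hent : ∀ r c : Fin (n + 1),
        ((A.submatrix Fin.succ ((1 : Fin (n + 3)).succAbove)).submatrix
          ((Fin.last (n + 1)).succAbove) Fin.succ) r c = tridiagR a r.castSucc c.succ := by
      intro r c
      simp only [Matrix.submatrix_apply]
      rw [Fin.succAbove_last, succAbove_one_succ, hAs]
    rw [Matrix.det_of_lowerTriangular _ (fun i j hij => by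
      rw [hent, tridiagR_apply', if_neg, if_neg]
      · have : (i : ℕ) < (j : ℕ) := hij
        simp only [Fin.coe_castSucc, Fin.val_succ]
        omega
      · have : (i : ℕ) < (j : ℕ) := hij
        simp only [Fin.coe_castSucc, Fin.val_succ]
        omega)]
    trans ∏ _r : Fin (n + 1), (-1 : ℝ)
    · exact Finset.prod_congr rfl fun r _ => by
        rw [hent, tridiagR_apply', if_neg (by simp), if_pos (by simp)]
    · simp
  have eG2 : (((A.submatrix Fin.succ ((Fin.last (n + 2)).succAbove)).submatrix
      ((0 : Fin (n + 2)).succAbove) Fin.succ)).det = (-1 : ℝ) ^ (n + 1) := by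
    have hent : ∀ r c : Fin (n + 1),
        ((A.submatrix Fin.succ ((Fin.last (n + 2)).succAbove)).submatrix
          ((0 : Fin (n + 2)).succAbove) Fin.succ) r c = tridiagR a r.succ c.castSucc := by
      intro r c
      simp only [Matrix.submatrix_apply]
      rw [Fin.succAbove_last, Fin.succAbove_zero, ← Fin.succ_castSucc, hAs]
    rw [Matrix.det_of_upperTriangular (fun i j hij => by
      rw [hent, tridiagR_apply', if_neg, if_neg]
      · have : (j : ℕ) < (i : ℕ) := hij
        simp only [Fin.coe_castSucc, Fin.val_succ]
        omega
      · have : (j : ℕ) < (i : ℕ) := hij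
        simp only [Fin.coe_castSucc, Fin.val_succ]
        omega)]
    trans ∏ _r : Fin (n + 1), (-1 : ℝ)
    · exact Finset.prod_congr rfl fun r _ => by
        rw [hent, tridiagR_apply', if_neg (by simp), if_pos (by simp)]
    · simp
  -- column entries of the two first-level minors
  have hM1col : ∀ i : Fin (n + 2),
      (A.submatrix Fin.succ ((1 : Fin (n + 3)).succAbove)) i 0 =
        if (i : ℕ) = 0 then u else if (i : ℕ) = n + 1 then v else 0 := by
    intro i
    rw [Matrix.submatrix_apply, succAbove_one_zero, hw2]
  have hM2col : ∀ i : Fin (n + 2),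
      (A.submatrix Fin.succ ((Fin.last (n + 2)).succAbove)) i 0 =
        if (i : ℕ) = 0 then u else if (i : ℕ) = n + 1 then v else 0 := by
    intro i
    rw [Matrix.submatrix_apply, Fin.succAbove_last, Fin.castSucc_zero, hw2]
  -- determinant of the first first-level minor
  have hM1 : (A.submatrix Fin.succ ((1 : Fin (n + 3)).succAbove)).det =
      u * Dr (List.ofFn (fun k : Fin (n + 1) => a k.succ)) +
        (-1 : ℝ) ^ (n + 1) * v * (-1 : ℝ) ^ (n + 1) := by
    rw [Matrix.det_succ_column_zero,
      Finset.sum_eq_add_of_mem (0 : Fin (n + 2)) (Fin.last (n + 1))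
        (Finset.mem_univ _) (Finset.mem_univ _)
        (by simp [Fin.ext_iff, Fin.val_last])
        (fun c _ hc => by
          have h0 : (c : ℕ) ≠ 0 := fun h => hc.1 (Fin.ext (by simp [h]))
          have h1 : (c : ℕ) ≠ n + 1 := fun h => hc.2 (Fin.ext (by simp [h, Fin.val_last]))
          rw [hM1col, if_neg h0, if_neg h1]
          ring)]
    have c1 : (if ((0 : Fin (n + 2)) : ℕ) = 0 then u
        else if ((0 : Fin (n + 2)) : ℕ) = n + 1 then v else 0) = u := by simp
    have c2 : (if ((Fin.last (n + 1)) : ℕ) = 0 then u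
        else if ((Fin.last (n + 1)) : ℕ) = n + 1 then v else 0) = v := by simp [Fin.val_last]
    rw [hM1col, hM1col, c1, c2, eF1, tridiag_det, eG1]
    simp only [Fin.val_zero, Fin.val_last]
    ring
  -- determinant of the second first-level minor
  have hM2 : (A.submatrix Fin.succ ((Fin.last (n + 2)).succAbove)).det =
      u * (-1 : ℝ) ^ (n + 1) +
        (-1 : ℝ) ^ (n + 1) * v * Dr (List.ofFn (fun k : Fin (n + 1) => a k.castSucc)) := by
    rw [Matrix.det_succ_column_zero,
      Finset.sum_eq_add_of_mem (0 : Fin (n + 2)) (Fin.last (n + 1))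
        (Finset.mem_univ _) (Finset.mem_univ _)
        (by simp [Fin.ext_iff, Fin.val_last])
        (fun c _ hc => by
          have h0 : (c : ℕ) ≠ 0 := fun h => hc.1 (Fin.ext (by simp [h]))
          have h1 : (c : ℕ) ≠ n + 1 := fun h => hc.2 (Fin.ext (by simp [h, Fin.val_last]))
          rw [hM2col, if_neg h0, if_neg h1]
          ring)]
    have c1 : (if ((0 : Fin (n + 2)) : ℕ) = 0 then u
        else if ((0 : Fin (n + 2)) : ℕ) = n + 1 then v else 0) = u := by simp
    have c2 : (if ((Fin.last (n + 1)) : ℕ) = 0 then u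
        else if ((Fin.last (n + 1)) : ℕ) = n + 1 then v else 0) = v := by simp [Fin.val_last]
    rw [hM2col, hM2col, c1, c2, eG2, eF2, tridiag_det]
    simp only [Fin.val_zero, Fin.val_last]
    ring
  -- full determinant
  have hdetA : A.det =
      (-1 : ℝ) * u * (A.submatrix Fin.succ ((1 : Fin (n + 3)).succAbove)).det +
        (-1 : ℝ) ^ (n + 2) * v * (A.submatrix Fin.succ ((Fin.last (n + 2)).succAbove)).det := by
    rw [Matrix.det_succ_row_zero,
      Finset.sum_eq_add_of_mem (1 : Fin (n + 3)) (Fin.last (n + 2))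
        (Finset.mem_univ _) (Finset.mem_univ _)
        (by simp [Fin.ext_iff, Fin.val_last])
        (fun c _ hc => by
          induction c using Fin.cases with
          | zero => rw [hA0]; ring
          | succ j =>
            have h0 : (j : ℕ) ≠ 0 := fun h =>
              hc.1 (by rw [show j = 0 from Fin.ext (by simp [h]), Fin.succ_zero_eq_one])
            have h1 : (j : ℕ) ≠ n + 1 := fun h =>
              hc.2 (by rw [show j = Fin.last (n + 1) from Fin.ext (by simp [h, Fin.val_last]),
                Fin.succ_last])
            rw [hw1, if_neg h0, if_neg h1]
            ring)]
    have e1 : A 0 1 = u := by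
      rw [← Fin.succ_zero_eq_one, hw1]
      simp
    have e2 : A 0 (Fin.last (n + 2)) = v := by
      rw [← Fin.succ_last, hw1]
      simp [Fin.val_last]
    rw [e1, e2]
    norm_num [Fin.val_last]
  -- put everything together
  have hdet : (borderedT a u v).det = A.det :=
    (Matrix.det_submatrix_equiv_self (finSuccEquiv (n + 2)) (borderedT a u v)).symm
  have htail : (List.ofFn a).tail = List.ofFn (fun k : Fin (n + 1) => a k.succ) := by
    rw [List.ofFn_succ]
    rfl
  have htake : (List.ofFn a).take (n + 2 - 1) = List.ofFn (fun k : Fin (n + 1) => a k.castSucc) := by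
    show (List.ofFn a).take (n + 1) = _
    rw [← Fin.ofFn_take_eq_take_ofFn (by omega : n + 1 ≤ n + 2) a]
    rfl
  rw [hdet, hdetA, hM1, hM2, htail, htake]
  have hx : ((-1 : ℝ) ^ (n + 1)) * ((-1 : ℝ) ^ (n + 1)) = 1 := by
    rw [← pow_add]
    exact Even.neg_one_pow ⟨n + 1, by ring⟩
  have hx2 : (-1 : ℝ) ^ (n + 2) = -((-1 : ℝ) ^ (n + 1)) := by
    rw [pow_succ]; ring
  rw [hx2]
  linear_combination (2 * u * v + v ^ 2 * Dr (List.ofFn (fun k : Fin (n + 1) => a k.castSucc))) * hx
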